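/- If partial conjugations x_{i_1,D_1}, ..., x_{i_p,D_p} in Out^0(W_n) pairwise commute, then there exists a hypertree Θ on [n] carrying all of them. -/

import Mathlib

/-- A hypergraph on `[n]`, identified with its set of hyperedges:
every hyperedge has at least two vertices. -/
def IsHypergraph {n : ℕ} (E : Finset (Finset (Fin n))) : Prop :=
  ∀ e ∈ E, 2 ≤ e.card

/-- Data of a walk: a length `len`, a sequence of `len + 1` vertices and
`len` hyperedges. -/
structure WalkData (n : ℕ) where
  len : ℕ
  verts : Fin (len + 1) → Fin n
  eds : Fin len → Finset (Fin n)

/-- `s` is a simple walk from `v` to `w` in the hypergraph `E`: an alternating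
sequence of pairwise distinct vertices and pairwise distinct hyperedges
`v = v₀, e₁, v₁, …, e_p, v_p = w` with `{vₖ, vₖ₊₁} ⊆ eₖ₊₁`. -/
def IsSimpleWalk {n : ℕ} (E : Finset (Finset (Fin n))) (v w : Fin n)
    (s : WalkData n) : Prop :=
  s.verts 0 = v ∧ s.verts (Fin.last s.len) = w ∧
  Function.Injective s.verts ∧ Function.Injective s.eds ∧
  ∀ k : Fin s.len, s.eds k ∈ E ∧ s.verts k.castSucc ∈ s.eds k ∧ s.verts k.succ ∈ s.eds k

/-- A hypertree: a hypergraph in which any two vertices are joined by a unique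
simple walk. -/
def IsHypertree {n : ℕ} (E : Finset (Finset (Fin n))) : Prop :=
  IsHypergraph E ∧ ∀ v w : Fin n, ∃! s : WalkData n, IsSimpleWalk E v w s

/-- The hypergraph `E` carries the partial conjugation `x_{i,D}`: every simple walk
from a vertex of `D` to a vertex of `[n] ∖ (D ∪ {i})` visits `i`. -/
def Carries {n : ℕ} (E : Finset (Finset (Fin n))) (i : Fin n)
    (D : Finset (Fin n)) : Prop :=
  ∀ d ∈ D, ∀ j : Fin n, j ∉ D → j ≠ i →
    ∀ s : WalkData n, IsSimpleWalk E d j s → ∃ k, s.verts k = i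

/-- Defining relations of `Wₙ`: each generator squares to the identity. -/
def wrels (n : ℕ) : Set (FreeGroup (Fin n)) :=
  {r | ∃ i : Fin n, r = FreeGroup.of i * FreeGroup.of i}

/-- The universal right-angled Coxeter group `Wₙ`. -/
abbrev W (n : ℕ) := PresentedGroup (wrels n)

/-- The generator `aᵢ` of `Wₙ`. -/
def gen {n : ℕ} (i : Fin n) : W n := PresentedGroup.of i

/-- `φ` is the partial conjugation with acting letter `aᵢ` and domain `D`. -/
def IsPC {n : ℕ} (φ : W n ≃* W n) (i : Fin n) (D : Finset (Fin n)) : Prop :=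
  (∀ j ∈ D, φ (gen j) = gen i * gen j * gen i) ∧ (∀ j ∉ D, φ (gen j) = gen j)

namespace HT15

variable {n : ℕ}

/-! ### Group-theoretic part -/

lemma presented_rel (i : Fin n) : gen i * gen i = 1 := by
  have : (QuotientGroup.mk' (Subgroup.normalClosure (wrels n)))
      (FreeGroup.of i * FreeGroup.of i) = 1 := by
    apply (QuotientGroup.eq_one_iff _).2
    exact Subgroup.subset_normalClosure ⟨i, rfl⟩
  exact (map_mul (QuotientGroup.mk' _) _ _).symm.trans this

def pcHom {G : Type*} [Group G] (g : Fin n → G) (hg : ∀ x, g x * g x = 1) :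
    W n →* G :=
  PresentedGroup.toGroup (f := g) (by rintro r ⟨i, rfl⟩; simp [hg])

lemma pcHom_gen {G : Type*} [Group G] (g : Fin n → G) (hg : ∀ x, g x * g x = 1)
    (x : Fin n) : pcHom g hg (gen x) = g x :=
  PresentedGroup.toGroup.of _

abbrev P3 := Equiv.Perm (Fin 3)
def sA : P3 := Equiv.swap 0 1
def sB : P3 := Equiv.swap 1 2
def sC : P3 := Equiv.swap 0 2

def abc {i j t : Fin n} (_ : i ≠ j) (_ : t ≠ i) (_ : t ≠ j) : Fin n → P3 :=
  fun x => if x = i then sA else if x = j then sB else if x = t then sC else 1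

lemma abc_sq {i j t : Fin n} (hij : i ≠ j) (hti : t ≠ i) (htj : t ≠ j) :
    ∀ x, abc hij hti htj x * abc hij hti htj x = 1 := by
  intro x
  unfold abc
  split_ifs <;> simp [sA, sB, sC]

lemma abc_i {i j t : Fin n} (hij : i ≠ j) (hti : t ≠ i) (htj : t ≠ j) :
    abc hij hti htj i = sA := by simp [abc]

lemma abc_j {i j t : Fin n} (hij : i ≠ j) (hti : t ≠ i) (htj : t ≠ j) :
    abc hij hti htj j = sB := by simp [abc, hij.symm]

lemma abc_t {i j t : Fin n} (hij : i ≠ j) (hti : t ≠ i) (htj : t ≠ j) :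
    abc hij hti htj t = sC := by simp [abc, hti, htj]

lemma kern1 {i j t : Fin n} (hij : i ≠ j) (hti : t ≠ i) (htj : t ≠ j) (w : W n)
    (e1 : gen t = w * gen t * w⁻¹)
    (e2 : gen i * gen j * gen i * gen i * (gen i * gen j * gen i)
        = w * (gen j * gen i * gen j) * w⁻¹)
    (e3 : gen i * gen j * gen i
        = w * (gen j * gen i * gen j * gen j * (gen j * gen i * gen j)) * w⁻¹) :
    False := by
  have hd : ∀ u : P3,
      ¬(sC = u * sC * u⁻¹ ∧
        sA * sB * sA * sA * (sA * sB * sA) = u * (sB * sA * sB) * u⁻¹ ∧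
        sA * sB * sA = u * (sB * sA * sB * sB * (sB * sA * sB)) * u⁻¹) := by decide
  refine hd (pcHom (abc hij hti htj) (abc_sq hij hti htj) w) ⟨?_, ?_, ?_⟩
  · simpa only [map_mul, map_inv, pcHom_gen, abc_t hij hti htj]
      using congrArg (pcHom (abc hij hti htj) (abc_sq hij hti htj)) e1
  · simpa only [map_mul, map_inv, pcHom_gen, abc_i hij hti htj, abc_j hij hti htj]
      using congrArg (pcHom (abc hij hti htj) (abc_sq hij hti htj)) e2
  · simpa only [map_mul, map_inv, pcHom_gen, abc_i hij hti htj, abc_j hij hti htj]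
      using congrArg (pcHom (abc hij hti htj) (abc_sq hij hti htj)) e3

lemma kern2 {i j t : Fin n} (hij : i ≠ j) (hti : t ≠ i) (htj : t ≠ j) (w : W n)
    (e1 : gen i = w * gen i * w⁻¹)
    (e2 : gen i * gen j * gen i * gen t * (gen i * gen j * gen i)
        = w * (gen j * gen t * gen j) * w⁻¹)
    (e3 : gen i * gen j * gen i = w * (gen i * gen j * gen i) * w⁻¹) :
    False := by
  have hd : ∀ u : P3,
      ¬(sA = u * sA * u⁻¹ ∧
        sA * sB * sA * sC * (sA * sB * sA) = u * (sB * sC * sB) * u⁻¹ ∧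
        sA * sB * sA = u * (sA * sB * sA) * u⁻¹) := by decide
  refine hd (pcHom (abc hij hti htj) (abc_sq hij hti htj) w) ⟨?_, ?_, ?_⟩
  · simpa only [map_mul, map_inv, pcHom_gen, abc_i hij hti htj]
      using congrArg (pcHom (abc hij hti htj) (abc_sq hij hti htj)) e1
  · simpa only [map_mul, map_inv, pcHom_gen, abc_i hij hti htj, abc_j hij hti htj,
      abc_t hij hti htj]
      using congrArg (pcHom (abc hij hti htj) (abc_sq hij hti htj)) e2
  · simpa only [map_mul, map_inv, pcHom_gen, abc_i hij hti htj, abc_j hij hti htj]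
      using congrArg (pcHom (abc hij hti htj) (abc_sq hij hti htj)) e3

lemma kern4 {i j t : Fin n} (hij : i ≠ j) (hti : t ≠ i) (htj : t ≠ j) (w : W n)
    (e1 : gen i = w * gen i * w⁻¹) (e2 : gen j = w * gen j * w⁻¹)
    (e3 : gen j * (gen i * gen t * gen i) * gen j
        = w * (gen i * (gen j * gen t * gen j) * gen i) * w⁻¹) :
    False := by
  have hd : ∀ u : P3,
      ¬(sA = u * sA * u⁻¹ ∧ sB = u * sB * u⁻¹ ∧
        sB * (sA * sC * sA) * sB = u * (sA * (sB * sC * sB) * sA) * u⁻¹) := by decide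
  refine hd (pcHom (abc hij hti htj) (abc_sq hij hti htj) w) ⟨?_, ?_, ?_⟩
  · simpa only [map_mul, map_inv, pcHom_gen, abc_i hij hti htj]
      using congrArg (pcHom (abc hij hti htj) (abc_sq hij hti htj)) e1
  · simpa only [map_mul, map_inv, pcHom_gen, abc_j hij hti htj]
      using congrArg (pcHom (abc hij hti htj) (abc_sq hij hti htj)) e2
  · simpa only [map_mul, map_inv, pcHom_gen, abc_i hij hti htj, abc_j hij hti htj,
      abc_t hij hti htj]
      using congrArg (pcHom (abc hij hti htj) (abc_sq hij hti htj)) e3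

end HT15

namespace HT15
variable {n : ℕ}

/-- constraint `(i, D)` separates `u` from `v`. -/
def Sep (a : Fin n) (A : Finset (Fin n)) (u v : Fin n) : Prop :=
  a ≠ u ∧ a ≠ v ∧ ¬(u ∈ A ↔ v ∈ A)

lemma Sep.symm {a : Fin n} {A : Finset (Fin n)} {u v : Fin n}
    (h : Sep a A u v) : Sep a A v u :=
  ⟨h.2.1, h.1, fun hiff => h.2.2 hiff.symm⟩

/-- compatibility of two partial conjugations, combinatorial form. -/
def CompatP (a : Fin n) (A : Finset (Fin n)) (b : Fin n) (B : Finset (Fin n)) : Prop :=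
  a = b ∨ ∃ X Y : Finset (Fin n),
    (X = A ∨ X = Aᶜ \ {a}) ∧ (Y = B ∨ Y = Bᶜ \ {b}) ∧
    ∀ z, ¬(z ∈ X ∪ {a} ∧ z ∈ Y ∪ {b})

lemma step {a b : Fin n} {A B : Finset (Fin n)} {u v : Fin n}
    (hc : CompatP a A b B) (h1 : Sep a A u v) (h2 : Sep b B a v) :
    Sep b B u v := by
  obtain ⟨hba, hbv, hsep2⟩ := h2
  obtain ⟨hau, hav, hsep1⟩ := h1
  rcases hc with hab | ⟨X, Y, hX, hY, hdis⟩
  · exact absurd hab.symm hba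
  -- `a ∉ Y`
  have haY : a ∉ Y ∪ {b} := fun h => hdis a ⟨Finset.mem_union_right _ (by simp), h⟩
  -- `v ∈ Y`
  have hvY : v ∈ Y := by
    rcases hY with rfl | rfl
    · -- Y = B; a ∉ B; so sides: a ∉ B ⇒ v ∈ B
      by_contra hv
      exact hsep2 (by
        constructor
        · intro ha; exact absurd (Finset.mem_union_left _ ha) haY
        · intro hv'; exact absurd hv' hv)
    · -- Y = Bᶜ \ {b}: a ∉ Y, a ≠ b ⇒ a ∈ B ⇒ v ∉ B and v ≠ b
      have haB : a ∈ B := by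
        by_contra haB
        exact haY (Finset.mem_union_left _ (by
          simp only [Finset.mem_sdiff, Finset.mem_compl, Finset.mem_singleton]
          exact ⟨haB, hba.symm⟩))
      have hvB : v ∉ B := fun hv => hsep2 ⟨fun _ => hv, fun _ => haB⟩
      simp only [Finset.mem_sdiff, Finset.mem_compl, Finset.mem_singleton]
      exact ⟨hvB, hbv.symm⟩
  -- `v ∉ X ∪ {a}`
  have hvX : v ∉ X ∪ {a} := fun h => hdis v ⟨h, Finset.mem_union_left _ hvY⟩
  -- `u ∈ X`
  have huX : u ∈ X := by
    rcases hX with rfl | rfl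
    · have hvA : v ∉ X := fun h => hvX (Finset.mem_union_left _ h)
      by_contra hu
      exact hsep1 ⟨fun h => absurd h hu, fun h => absurd h hvA⟩
    · have hvA : v ∈ A := by
        by_contra hv
        exact hvX (Finset.mem_union_left _ (by
          simp only [Finset.mem_sdiff, Finset.mem_compl, Finset.mem_singleton]
          exact ⟨hv, hav.symm⟩))
      have huA : u ∉ A := fun hu => hsep1 ⟨fun _ => hvA, fun _ => hu⟩
      simp only [Finset.mem_sdiff, Finset.mem_compl, Finset.mem_singleton]
      exact ⟨huA, hau.symm⟩
  -- `u ∉ Y ∪ {b}`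
  have huY : u ∉ Y ∪ {b} := fun h => hdis u ⟨Finset.mem_union_left _ huX, h⟩
  have hbu : b ≠ u := fun h => huY (Finset.mem_union_right _ (by simp [h.symm]))
  refine ⟨hbu, hbv, ?_⟩
  -- u ∉ Y, v ∈ Y: opposite B-sides
  have huYY : u ∉ Y := fun h => huY (Finset.mem_union_left _ h)
  rcases hY with rfl | rfl
  · exact fun hiff => huYY (hiff.2 hvY)
  · -- Y = Bᶜ \ {b} : v ∉ B; u ∉ Y, u ≠ b ⇒ u ∈ B
    have hvB : v ∉ B := by
      simp only [Finset.mem_sdiff, Finset.mem_compl, Finset.mem_singleton] at hvY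
      exact hvY.1
    have huB : u ∈ B := by
      by_contra hu
      exact huYY (by
        simp only [Finset.mem_sdiff, Finset.mem_compl, Finset.mem_singleton]
        exact ⟨hu, hbu.symm⟩)
    exact fun hiff => hvB (hiff.1 huB)




/-- The graph of allowed edges. -/
def Gstar {p : ℕ} (ii : Fin p → Fin n) (DD : Fin p → Finset (Fin n)) :
    SimpleGraph (Fin n) where
  Adj u v := u ≠ v ∧ ∀ k, ¬ Sep (ii k) (DD k) u v
  symm := ⟨fun u v ⟨h1, h2⟩ => ⟨h1.symm, fun k hs => h2 k hs.symm⟩⟩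
  loopless := ⟨fun u ⟨h, _⟩ => h rfl⟩

lemma gstar_reachable {p : ℕ} (ii : Fin p → Fin n) (DD : Fin p → Finset (Fin n))
    (hcompat : ∀ k l, CompatP (ii k) (DD k) (ii l) (DD l)) :
    ∀ u v : Fin n, (Gstar ii DD).Reachable u v := by
  classical
  suffices H : ∀ N u v,
      (Finset.univ.filter (fun k => Sep (ii k) (DD k) u v)).card ≤ N →
      (Gstar ii DD).Reachable u v by
    intro u v
    exact H _ u v le_rfl
  intro N
  induction N with
  | zero =>
    intro u v hcard
    rcases eq_or_ne u v with rfl | huv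
    · exact SimpleGraph.Reachable.refl u
    · refine SimpleGraph.Adj.reachable (show u ≠ v ∧ ∀ k, ¬ Sep (ii k) (DD k) u v from ⟨huv, fun k hs => ?_⟩)
      have : k ∈ Finset.univ.filter (fun k => Sep (ii k) (DD k) u v) := by
        simp [hs]
      have hemp := Finset.card_eq_zero.mp (Nat.le_zero.mp hcard)
      rw [hemp] at this
      simp at this
  | succ N IH =>
    intro u v hcard
    by_cases h0 : (Finset.univ.filter (fun k => Sep (ii k) (DD k) u v)).card ≤ N
    · exact IH u v h0
    · have hne : (Finset.univ.filter (fun k => Sep (ii k) (DD k) u v)).Nonempty := by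
        rw [Finset.nonempty_iff_ne_empty]
        intro h
        simp [h] at h0
      obtain ⟨l, hl⟩ := hne
      rw [Finset.mem_filter] at hl
      have hsl : Sep (ii l) (DD l) u v := hl.2
      -- first half : u to (ii l)
      have hc1 : (Finset.univ.filter (fun k => Sep (ii k) (DD k) u (ii l))).card ≤ N := by
        have hsub : Finset.univ.filter (fun k => Sep (ii k) (DD k) u (ii l)) ⊆
            (Finset.univ.filter (fun k => Sep (ii k) (DD k) u v)).erase l := by
          intro m hm
          rw [Finset.mem_filter] at hm
          have hm2 : Sep (ii m) (DD m) u (ii l) := hm.2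
          refine Finset.mem_erase.2 ⟨?_, ?_⟩
          · rintro rfl; exact hm2.2.1 rfl
          · rw [Finset.mem_filter]
            exact ⟨Finset.mem_univ _, (step (hcompat l m) hsl.symm hm2.symm).symm⟩
        calc _ ≤ ((Finset.univ.filter (fun k => Sep (ii k) (DD k) u v)).erase l).card :=
              Finset.card_le_card hsub
          _ ≤ (Finset.univ.filter (fun k => Sep (ii k) (DD k) u v)).card - 1 := by
              rw [Finset.card_erase_of_mem (by rw [Finset.mem_filter]; exact ⟨hl.1, hsl⟩)]
          _ ≤ N := by omega
      -- second half : (ii l) to v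
      have hc2 : (Finset.univ.filter (fun k => Sep (ii k) (DD k) (ii l) v)).card ≤ N := by
        have hsub : Finset.univ.filter (fun k => Sep (ii k) (DD k) (ii l) v) ⊆
            (Finset.univ.filter (fun k => Sep (ii k) (DD k) u v)).erase l := by
          intro m hm
          rw [Finset.mem_filter] at hm
          have hm2 : Sep (ii m) (DD m) (ii l) v := hm.2
          refine Finset.mem_erase.2 ⟨?_, ?_⟩
          · rintro rfl; exact hm2.1 rfl
          · rw [Finset.mem_filter]
            exact ⟨Finset.mem_univ _, step (hcompat l m) hsl hm2⟩
        calc _ ≤ ((Finset.univ.filter (fun k => Sep (ii k) (DD k) u v)).erase l).card :=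
              Finset.card_le_card hsub
          _ ≤ (Finset.univ.filter (fun k => Sep (ii k) (DD k) u v)).card - 1 := by
              rw [Finset.card_erase_of_mem (by rw [Finset.mem_filter]; exact ⟨hl.1, hsl⟩)]
          _ ≤ N := by omega
      exact (IH u (ii l) hc1).trans (IH (ii l) v hc2)



variable {V : Type*} [Fintype V]

lemma reachable_of_reachable_del {G : SimpleGraph V} {e : Sym2 V}
    (hstep : ∀ {a b : V}, G.Adj a b → (G \ SimpleGraph.fromEdgeSet {e}).Reachable a b)
    {a b : V} (h : G.Reachable a b) :
    (G \ SimpleGraph.fromEdgeSet {e}).Reachable a b := by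
  obtain ⟨w⟩ := h
  induction w with
  | nil => exact SimpleGraph.Reachable.refl _
  | cons h q IH => exact (hstep h).trans IH

lemma exists_tree_le (G : SimpleGraph V) (hG : G.Connected) :
    ∃ T : SimpleGraph V, T ≤ G ∧ T.IsTree := by
  classical
  obtain ⟨m, hm⟩ : ∃ m, G.edgeSet.ncard = m := ⟨_, rfl⟩
  induction m using Nat.strong_induction_on generalizing G with
  | _ m IH =>
    by_cases hac : G.IsAcyclic
    · exact ⟨G, le_rfl, ⟨hG, hac⟩⟩
    · rw [SimpleGraph.isAcyclic_iff_forall_edge_isBridge] at hac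
      push_neg at hac
      obtain ⟨e, heE, hebr⟩ := hac
      set G' := G \ SimpleGraph.fromEdgeSet {e} with hG'
      have hle : G' ≤ G := sdiff_le
      -- G' is connected
      have hstep : ∀ {a b : V}, G.Adj a b → G'.Reachable a b := by
        intro a b hab
        by_cases hab' : s(a, b) = e
        · -- the deleted edge: use that it is not a bridge
          rw [← hab'] at hebr
          rw [SimpleGraph.isBridge_iff] at hebr
          push_neg at hebr
          rw [hab'] at hebr
          exact hebr
        · refine SimpleGraph.Adj.reachable ?_
          rw [hG', SimpleGraph.sdiff_adj]
          refine ⟨hab, ?_⟩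
          rw [SimpleGraph.fromEdgeSet_adj]
          rintro ⟨h1, -⟩
          exact hab' h1
      have hG'conn : G'.Connected := by
        have hne : Nonempty V := hG.nonempty
        refine SimpleGraph.Connected.mk (fun a b => ?_)
        exact reachable_of_reachable_del hstep (hG.preconnected a b)
      -- fewer edges
      have hcard : G'.edgeSet.ncard < G.edgeSet.ncard := by
        apply Set.ncard_lt_ncard
        · constructor
          · rw [hG', SimpleGraph.edgeSet_sdiff]
            exact Set.diff_subset
          · intro hsub
            have : e ∈ G'.edgeSet := hsub heE
            rw [hG', SimpleGraph.edgeSet_sdiff] at this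
            have he' : e ∈ (SimpleGraph.fromEdgeSet {e}).edgeSet := by
              rw [SimpleGraph.edgeSet_fromEdgeSet]
              refine Set.mem_diff_of_mem rfl ?_
              intro hdiag
              exact (SimpleGraph.not_isDiag_of_mem_edgeSet G heE) hdiag
            exact this.2 he'
        · exact Set.toFinite _
      obtain ⟨T, hT1, hT2⟩ := IH _ (hm ▸ hcard) G' hG'conn rfl
      exact ⟨T, hT1.trans hle, hT2⟩


/-- The pair `{x, y}` as a `Finset`, from a `Sym2`. -/
def pairFinset : Sym2 (Fin n) → Finset (Fin n) :=
  Sym2.lift ⟨fun x y => {x, y}, fun x y => Finset.pair_comm x y⟩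

@[simp] lemma pairFinset_mk (x y : Fin n) : pairFinset s(x, y) = {x, y} := rfl

lemma walkdata_ext {s₁ s₂ : WalkData n} (h : s₁.len = s₂.len)
    (hv : ∀ (m : ℕ) (hm : m < s₁.len + 1) (hm' : m < s₂.len + 1),
      s₁.verts ⟨m, hm⟩ = s₂.verts ⟨m, hm'⟩)
    (he : ∀ (m : ℕ) (hm : m < s₁.len) (hm' : m < s₂.len),
      s₁.eds ⟨m, hm⟩ = s₂.eds ⟨m, hm'⟩) : s₁ = s₂ := by
  obtain ⟨len₁, v₁, e₁⟩ := s₁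
  obtain ⟨len₂, v₂, e₂⟩ := s₂
  dsimp at h hv he
  subst h
  simp only [WalkData.mk.injEq, heq_eq_eq, true_and]
  constructor
  · funext k
    have := hv k.1 k.2 k.2
    simpa using this
  · funext k
    have := he k.1 k.2 k.2
    simpa using this

section Tree
variable (T : SimpleGraph (Fin n))

lemma support_eq_ofFn {u v : Fin n} (p : T.Walk u v) :
    p.support = List.ofFn (fun k : Fin (p.length + 1) => p.getVert k) := by
  induction p with
  | nil => simp [SimpleGraph.Walk.support_nil, List.ofFn_succ]
  | cons h q IH =>
    rw [SimpleGraph.Walk.support_cons, IH]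
    conv_rhs => rw [List.ofFn_succ]
    congr 1

lemma isPath_iff_injective {u v : Fin n} (p : T.Walk u v) :
    p.IsPath ↔ Function.Injective (fun k : Fin (p.length + 1) => p.getVert k) := by
  rw [SimpleGraph.Walk.isPath_def, support_eq_ofFn, List.nodup_ofFn]

/-- Build a walk with prescribed vertex sequence. -/
lemma build_walk (len : ℕ) (f : ℕ → Fin n) (hadj : ∀ k < len, T.Adj (f k) (f (k + 1))) :
    ∃ p : T.Walk (f 0) (f len), p.length = len ∧ ∀ m ≤ len, p.getVert m = f m := by
  induction len generalizing f with
  | zero =>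
    refine ⟨SimpleGraph.Walk.nil, rfl, fun m hm => ?_⟩
    interval_cases m
    simp
  | succ len IH =>
    obtain ⟨q, hq1, hq2⟩ := IH (fun m => f (m + 1)) (fun k hk => hadj (k + 1) (by omega))
    refine ⟨SimpleGraph.Walk.cons (hadj 0 (by omega)) q, by simp [hq1], fun m hm => ?_⟩
    match m with
    | 0 => simp
    | m + 1 =>
      rw [SimpleGraph.Walk.getVert_cons_succ]
      exact hq2 m (by omega)

variable {E : Finset (Finset (Fin n))}

lemma edsForced (hE : ∀ e, e ∈ E ↔ ∃ x y, T.Adj x y ∧ e = {x, y})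
    {v w : Fin n} {s : WalkData n} (hs : IsSimpleWalk E v w s) (k : Fin s.len) :
    T.Adj (s.verts k.castSucc) (s.verts k.succ) ∧
      s.eds k = {s.verts k.castSucc, s.verts k.succ} := by
  obtain ⟨hEk, hm1, hm2⟩ := hs.2.2.2.2 k
  rw [hE] at hEk
  obtain ⟨x, y, hadj, he⟩ := hEk
  rw [he] at hm1 hm2
  have hne : s.verts k.castSucc ≠ s.verts k.succ := by
    intro h
    have := hs.2.2.1 h
    exact absurd (congrArg Fin.val this) (by simp)
  simp only [Finset.mem_insert, Finset.mem_singleton] at hm1 hm2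
  rcases hm1 with h1 | h1 <;> rcases hm2 with h2 | h2
  · exact absurd (h1.trans h2.symm) hne
  · exact ⟨h1 ▸ h2 ▸ hadj, by rw [he, h1, h2]⟩
  · exact ⟨h1 ▸ h2 ▸ hadj.symm, by rw [he, h1, h2, Finset.pair_comm]⟩
  · exact absurd (h1.trans h2.symm) hne

/-- The `WalkData` associated to a path. -/
def dataOfPath {v w : Fin n} (p : T.Walk v w) : WalkData n :=
  ⟨p.length, fun k => p.getVert k, fun k => {p.getVert k.1, p.getVert (k.1 + 1)}⟩

lemma getVert_inj {v w : Fin n} {p : T.Walk v w} (hp : p.IsPath) :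
    ∀ {m m' : ℕ}, m < p.length + 1 → m' < p.length + 1 →
      p.getVert m = p.getVert m' → m = m' := by
  intro m m' hm hm' hg
  have hinj := (isPath_iff_injective T p).1 hp
  have h := hinj (a₁ := ⟨m, hm⟩) (a₂ := ⟨m', hm'⟩) hg
  exact congrArg Fin.val h

lemma dataOfPath_isSimpleWalk (hE : ∀ e, e ∈ E ↔ ∃ x y, T.Adj x y ∧ e = {x, y})
    {v w : Fin n} (p : T.Walk v w) (hp : p.IsPath) :
    IsSimpleWalk E v w (dataOfPath T p) := by
  refine ⟨by simp [dataOfPath], by simp [dataOfPath], (isPath_iff_injective T p).1 hp,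
    ?_, fun k => ⟨?_, ?_, ?_⟩⟩
  · -- eds injective
    intro a b hab
    dsimp [dataOfPath] at hab
    have h1 : p.getVert a.1 ∈ ({p.getVert b.1, p.getVert (b.1 + 1)} : Finset (Fin n)) := by
      rw [← hab]; simp
    have h2 : p.getVert (a.1 + 1) ∈ ({p.getVert b.1, p.getVert (b.1 + 1)} : Finset (Fin n)) := by
      rw [← hab]; simp
    simp only [Finset.mem_insert, Finset.mem_singleton] at h1 h2
    have hlen : (dataOfPath T p).len = p.length := rfl
    have h2a := a.2
    have h2b := b.2
    have ha1 : a.1 < p.length + 1 := by omega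
    have ha2 : a.1 + 1 < p.length + 1 := by omega
    have hb1 : b.1 < p.length + 1 := by omega
    have hb2 : b.1 + 1 < p.length + 1 := by omega
    apply Fin.ext
    rcases h1 with h1 | h1 <;> rcases h2 with h2 | h2
    · exact getVert_inj T hp ha1 hb1 h1
    · have := getVert_inj T hp ha1 hb1 h1
      have := getVert_inj T hp ha2 hb2 h2
      omega
    · have := getVert_inj T hp ha1 hb2 h1
      have := getVert_inj T hp ha2 hb1 h2
      omega
    · have := getVert_inj T hp ha2 hb2 h2
      omega
  · rw [hE]
    exact ⟨p.getVert k.1, p.getVert (k.1 + 1), p.adj_getVert_succ k.2, rfl⟩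
  · simp [dataOfPath]; exact Or.inl rfl
  · simp [dataOfPath, Fin.val_succ]; exact Or.inr rfl

lemma path_of_walkdata (hE : ∀ e, e ∈ E ↔ ∃ x y, T.Adj x y ∧ e = {x, y})
    {v w : Fin n} {s : WalkData n} (hs : IsSimpleWalk E v w s) :
    ∃ p : T.Walk v w, p.IsPath ∧ p.length = s.len ∧
      ∀ (m : ℕ) (hm : m < s.len + 1), p.getVert m = s.verts ⟨m, hm⟩ := by
  set f : ℕ → Fin n := fun m => s.verts ⟨min m s.len, by omega⟩ with hf
  have hfeq : ∀ (m : ℕ) (hm : m < s.len + 1), f m = s.verts ⟨m, hm⟩ := by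
    intro m hm
    simp only [hf]
    congr 1
    exact Fin.ext (by simp; omega)
  have hadj : ∀ k < s.len, T.Adj (f k) (f (k + 1)) := by
    intro k hk
    have h := (edsForced T hE hs ⟨k, hk⟩).1
    have e1 : f k = s.verts (Fin.castSucc ⟨k, hk⟩) := by
      rw [hfeq k (by omega)]; congr 1
    have e2 : f (k + 1) = s.verts (Fin.succ ⟨k, hk⟩) := by
      rw [hfeq (k + 1) (by omega)]; congr 1
    rw [e1, e2]; exact h
  obtain ⟨p₀, hp1, hp2⟩ := build_walk T s.len f hadj
  have hv : f 0 = v := by rw [hfeq 0 (by omega)]; exact hs.1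
  have hw : f s.len = w := by
    rw [hfeq s.len (by omega)]
    have := hs.2.1
    simpa [Fin.last] using this
  refine ⟨p₀.copy hv hw, ?_, by simp [hp1], ?_⟩
  · rw [isPath_iff_injective]
    intro a b hab
    simp only [SimpleGraph.Walk.getVert_copy] at hab
    have ha : (a : ℕ) < s.len + 1 := by
      have := a.2
      simpa [SimpleGraph.Walk.length_copy, hp1] using this
    have hb : (b : ℕ) < s.len + 1 := by
      have := b.2
      simpa [SimpleGraph.Walk.length_copy, hp1] using this
    have ha' : p₀.getVert a = s.verts ⟨a, ha⟩ := by
      rw [hp2 a (by omega), hfeq a ha]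
    have hb' : p₀.getVert b = s.verts ⟨b, hb⟩ := by
      rw [hp2 b (by omega), hfeq b hb]
    rw [ha', hb'] at hab
    have := hs.2.2.1 hab
    have hval : (a : ℕ) = (b : ℕ) := by
      have h' := congrArg Fin.val this
      simpa using h'
    exact Fin.ext hval
  · intro m hm
    rw [SimpleGraph.Walk.getVert_copy, hp2 m (by omega), hfeq m hm]

lemma hypertree_of_tree (hT : T.IsTree)
    (hE : ∀ e, e ∈ E ↔ ∃ x y, T.Adj x y ∧ e = {x, y}) :
    IsHypertree E := by
  constructor
  · intro e he
    rw [hE] at he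
    obtain ⟨x, y, hadj, rfl⟩ := he
    rw [Finset.card_insert_of_notMem (by simp [hadj.ne])]
    simp
  · intro v w
    obtain ⟨p, hp, hpu⟩ := hT.existsUnique_path v w
    refine ⟨dataOfPath T p, dataOfPath_isSimpleWalk T hE p hp, ?_⟩
    intro s hs
    obtain ⟨q, hq, hql, hqv⟩ := path_of_walkdata T hE hs
    have hqp : q = p := hpu q hq
    subst hqp
    have hlen : s.len = (dataOfPath T q).len := by
      simp [dataOfPath, hql]
    refine (walkdata_ext hlen.symm ?_ ?_).symm
    · intro m hm hm'
      dsimp [dataOfPath]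
      rw [hqv m hm']
    · intro m hm hm'
      dsimp [dataOfPath]
      have h2 := (edsForced T hE hs ⟨m, hm'⟩).2
      rw [h2]
      have e1 : s.verts (Fin.castSucc ⟨m, hm'⟩) = q.getVert m := by
        rw [hqv m (by omega)]; congr 1
      have e2 : s.verts (Fin.succ ⟨m, hm'⟩) = q.getVert (m + 1) := by
        rw [hqv (m + 1) (by omega)]; congr 1
      rw [e1, e2]

end Tree

end HT15

open HT15

/-- If the partial conjugations `x_{i₁,D₁}, …, x_{i_p,D_p}` pairwise commute in
`Out⁰(Wₙ)` (i.e. each pairwise commutator of the corresponding automorphisms is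
inner), then there is a hypertree on `[n]` carrying all of them. -/
theorem stmt15 (n p : ℕ) (i : Fin p → Fin n) (D : Fin p → Finset (Fin n))
    (hd : ∀ k, i k ∉ D k)
    (φ : Fin p → (W n ≃* W n)) (hpc : ∀ k, IsPC (φ k) (i k) (D k))
    (hcomm : ∀ k l : Fin p, ∃ w : W n, ∀ x : W n,
      (φ k) ((φ l) x) = w * (φ l) ((φ k) x) * w⁻¹) :
    ∃ E : Finset (Finset (Fin n)), IsHypertree E ∧ ∀ k, Carries E (i k) (D k) := by
  classical
  -- Step 1 : pairwise combinatorial compatibility, extracted from the group hypothesis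
  have compat : ∀ k l : Fin p, CompatP (i k) (D k) (i l) (D l) := by
    intro k l
    by_cases hik : i k = i l
    · exact Or.inl hik
    refine Or.inr ?_
    by_contra hnc
    push_neg at hnc
    -- hnc : ∀ X Y, choices → ∃ z, z ∈ X ∪ {i k} ∧ z ∈ Y ∪ {i l}
    by_cases hjD : i l ∈ D k <;> by_cases hiE : i k ∈ D l
    · -- case 1 : i l ∈ D k, i k ∈ D l ; witness in both complements
      obtain ⟨z, hz1, hz2⟩ := hnc ((D k)ᶜ \ {i k}) ((D l)ᶜ \ {i l}) (Or.inr rfl) (Or.inr rfl)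
      simp only [Finset.mem_union, Finset.mem_sdiff, Finset.mem_compl,
        Finset.mem_singleton] at hz1 hz2
      have hzik : z ≠ i k := by rintro rfl; rcases hz2 with ⟨h1, -⟩ | h1 <;> tauto
      have hzil : z ≠ i l := by rintro rfl; rcases hz1 with ⟨h1, -⟩ | h1 <;> tauto
      have hzDk : z ∉ D k := by rcases hz1 with ⟨h1, -⟩ | h1 <;> tauto
      have hzDl : z ∉ D l := by rcases hz2 with ⟨h1, -⟩ | h1 <;> tauto
      obtain ⟨w, hw⟩ := hcomm k l
      have e1 := hw (gen z)
      simp only [(hpc l).2 _ hzDl, (hpc k).2 _ hzDk] at e1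
      have e2 := hw (gen (i k))
      simp only [map_mul, (hpc k).2 _ (hd k), (hpc l).1 _ hiE, (hpc k).1 _ hjD] at e2
      have e3 := hw (gen (i l))
      simp only [map_mul, (hpc l).2 _ (hd l), (hpc k).1 _ hjD, (hpc l).1 _ hiE] at e3
      exact kern1 hik hzik hzil w e1 e2 e3
    · -- case 2 : i l ∈ D k, i k ∉ D l ; witness in R_k ∩ D_l
      obtain ⟨z, hz1, hz2⟩ := hnc ((D k)ᶜ \ {i k}) (D l) (Or.inr rfl) (Or.inl rfl)
      simp only [Finset.mem_union, Finset.mem_sdiff, Finset.mem_compl,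
        Finset.mem_singleton] at hz1 hz2
      have hzik : z ≠ i k := by rintro rfl; rcases hz2 with h1 | h1 <;> tauto
      have hzil : z ≠ i l := by rintro rfl; rcases hz1 with ⟨h1, -⟩ | h1 <;> tauto
      have hzDk : z ∉ D k := by rcases hz1 with ⟨h1, -⟩ | h1 <;> tauto
      have hzDl : z ∈ D l := by rcases hz2 with h1 | h1 <;> tauto
      obtain ⟨w, hw⟩ := hcomm k l
      have e1 := hw (gen (i k))
      simp only [(hpc k).2 _ (hd k), (hpc l).2 _ hiE] at e1
      have e2 := hw (gen z)
      simp only [map_mul, (hpc l).1 _ hzDl, (hpc k).1 _ hjD, (hpc k).2 _ hzDk] at e2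
      have e3 := hw (gen (i l))
      simp only [map_mul, (hpc l).2 _ (hd l), (hpc k).1 _ hjD, (hpc l).2 _ hiE] at e3
      exact kern2 hik hzik hzil w e1 e2 e3
    · -- case 3 : i l ∉ D k, i k ∈ D l ; apply case 2 with roles swapped
      obtain ⟨z, hz1, hz2⟩ := hnc (D k) ((D l)ᶜ \ {i l}) (Or.inl rfl) (Or.inr rfl)
      simp only [Finset.mem_union, Finset.mem_sdiff, Finset.mem_compl,
        Finset.mem_singleton] at hz1 hz2
      have hzik : z ≠ i k := by rintro rfl; rcases hz1 with h1 | h1 <;> tauto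
      have hzil : z ≠ i l := by rintro rfl; rcases hz2 with ⟨h1, -⟩ | h1 <;> tauto
      have hzDk : z ∈ D k := by rcases hz1 with h1 | h1 <;> tauto
      have hzDl : z ∉ D l := by rcases hz2 with ⟨h1, -⟩ | h1 <;> tauto
      obtain ⟨w, hw⟩ := hcomm l k
      have e1 := hw (gen (i l))
      simp only [(hpc l).2 _ (hd l), (hpc k).2 _ hjD] at e1
      have e2 := hw (gen z)
      simp only [map_mul, (hpc k).1 _ hzDk, (hpc l).1 _ hiE, (hpc l).2 _ hzDl] at e2
      have e3 := hw (gen (i k))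
      simp only [map_mul, (hpc k).2 _ (hd k), (hpc l).1 _ hiE, (hpc k).2 _ hjD] at e3
      exact kern2 (Ne.symm hik) hzil hzik w e1 e2 e3
    · -- case 4 : i l ∉ D k, i k ∉ D l ; witness in D_k ∩ D_l
      obtain ⟨z, hz1, hz2⟩ := hnc (D k) (D l) (Or.inl rfl) (Or.inl rfl)
      simp only [Finset.mem_union, Finset.mem_singleton] at hz1 hz2
      have hzik : z ≠ i k := by rintro rfl; rcases hz2 with h1 | h1 <;> tauto
      have hzil : z ≠ i l := by rintro rfl; rcases hz1 with h1 | h1 <;> tauto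
      have hzDk : z ∈ D k := by rcases hz1 with h1 | h1 <;> tauto
      have hzDl : z ∈ D l := by rcases hz2 with h1 | h1 <;> tauto
      obtain ⟨w, hw⟩ := hcomm k l
      have e1 := hw (gen (i k))
      simp only [(hpc k).2 _ (hd k), (hpc l).2 _ hiE] at e1
      have e2 := hw (gen (i l))
      simp only [(hpc l).2 _ (hd l), (hpc k).2 _ hjD] at e2
      have e3 := hw (gen z)
      simp only [map_mul, (hpc l).1 _ hzDl, (hpc k).2 _ hjD, (hpc k).1 _ hzDk,
        (hpc l).2 _ hiE] at e3
      exact kern4 hik hzik hzil w e1 e2 e3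
  -- Step 2 : the combinatorial construction
  rcases Nat.eq_zero_or_pos n with rfl | hn
  · -- no vertices : the empty hypergraph works
    refine ⟨∅, ⟨fun e he => absurd he (Finset.notMem_empty e), fun v _ => v.elim0⟩,
      fun k d hd' => (d : Fin 0).elim0⟩
  have hne : Nonempty (Fin n) := ⟨⟨0, hn⟩⟩
  -- the allowed graph is connected
  have hconn : (Gstar i D).Connected :=
    SimpleGraph.Connected.mk (gstar_reachable i D compat)
  obtain ⟨T, hTG, hTree⟩ := exists_tree_le (Gstar i D) hconn
  -- the hyperedge set
  set E : Finset (Finset (Fin n)) :=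
    ((Set.toFinite T.edgeSet).toFinset).image pairFinset with hEdef
  have hE : ∀ e, e ∈ E ↔ ∃ x y, T.Adj x y ∧ e = {x, y} := by
    intro e
    rw [hEdef, Finset.mem_image]
    constructor
    · rintro ⟨f, hf, rfl⟩
      rw [Set.Finite.mem_toFinset] at hf
      induction f using Sym2.ind with
      | _ x y => exact ⟨x, y, T.mem_edgeSet.mp hf, rfl⟩
    · rintro ⟨x, y, hadj, rfl⟩
      exact ⟨s(x, y), (Set.toFinite T.edgeSet).mem_toFinset.mpr (T.mem_edgeSet.mpr hadj), rfl⟩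
  refine ⟨E, hypertree_of_tree T hTree hE, ?_⟩
  -- carrying
  intro k d hdD j hjD hji s hs
  by_contra hno
  push_neg at hno
  have hall : ∀ m : Fin (s.len + 1), s.verts m ∈ D k := by
    intro m
    induction m using Fin.induction with
    | zero => rw [hs.1]; exact hdD
    | succ m IH =>
      have hadj := (edsForced T hE hs m).1
      have hG : (Gstar i D).Adj (s.verts m.castSucc) (s.verts m.succ) := hTG hadj
      obtain ⟨-, hnosep⟩ := (hG : s.verts m.castSucc ≠ s.verts m.succ ∧
        ∀ k, ¬ Sep (i k) (D k) (s.verts m.castSucc) (s.verts m.succ))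
      have := hnosep k
      rw [HT15.Sep] at this
      push_neg at this
      by_contra hnot
      exact absurd ((this (Ne.symm (hno _)) (Ne.symm (hno _))).mp IH) hnot
  have hlast := hall (Fin.last s.len)
  rw [hs.2.1] at hlast
  exact hjD hlast
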